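/- Let f : ℝ³ → ℝ³ be Lebesgue measurable with ‖f‖_{L³ʷ(ℝ³)} < ∞. Then the following three conditions are equivalent: (a) ‖𝟙_{B(0,r)}·f‖_{L³ʷ(ℝ³)} → 0 as r → 0⁺; (b) for every ε > 0 there exists a measurable g : ℝ³ → ℝ³ with ‖g‖_{L³ʷ(ℝ³)} < ∞, with g = 0 almost everywhere on some open ball B(0,ρ) with ρ > 0, and with ‖f − g‖_{L³ʷ(ℝ³)} < ε; (c) for every ε > 0 there exists a measurable g : ℝ³ → ℝ³ with ‖g‖_{L³ʷ(ℝ³)} < ∞, with g essentially bounded on some open ball B(0,ρ) with ρ > 0, and with ‖f − g‖_{L³ʷ(ℝ³)} < ε. -/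

import Mathlib

open MeasureTheory ENNReal Filter

noncomputable section

/-- Points of `ℝ³` with the Euclidean norm. -/
abbrev E3 := EuclideanSpace ℝ (Fin 3)

/-- The weak-`L³` (Lorentz `L^{3,∞}`) quasinorm of a vector field `g : ℝ³ → ℝ³` with
respect to Lebesgue measure:
`‖g‖_{L³ʷ} = sup_{t>0} t · |{x : |g(x)| > t}|^{1/3}`. -/
def weakL3 (g : E3 → E3) : ℝ≥0∞ :=
  ⨆ (t : ℝ) (_ : 0 < t),
    ENNReal.ofReal t * (volume {x : E3 | t < ‖g x‖}) ^ ((1 : ℝ) / 3)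

/-- (a) The weak-`L³` norm of `f` on balls around the origin tends to `0` with the radius. -/
def smallAtOrigin (f : E3 → E3) : Prop :=
  Tendsto (fun r : ℝ => weakL3 ((Metric.ball (0 : E3) r).indicator f))
    (nhdsWithin 0 (Set.Ioi 0)) (nhds 0)

/-- (b) `f` is approximable in weak `L³` by weak-`L³` functions vanishing a.e. in a
neighborhood of the origin. -/
def approxByVanishing (f : E3 → E3) : Prop :=
  ∀ ε : ℝ, 0 < ε → ∃ g : E3 → E3, Measurable g ∧ weakL3 g < ⊤ ∧
    (∃ ρ : ℝ, 0 < ρ ∧ ∀ᵐ x ∂volume, x ∈ Metric.ball (0 : E3) ρ → g x = 0) ∧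
    weakL3 (fun x => f x - g x) < ENNReal.ofReal ε

/-- (c) `f` is approximable in weak `L³` by weak-`L³` functions essentially bounded in a
neighborhood of the origin. -/
def approxByBounded (f : E3 → E3) : Prop :=
  ∀ ε : ℝ, 0 < ε → ∃ g : E3 → E3, Measurable g ∧ weakL3 g < ⊤ ∧
    (∃ ρ : ℝ, 0 < ρ ∧ ∃ M : ℝ, ∀ᵐ x ∂volume, x ∈ Metric.ball (0 : E3) ρ → ‖g x‖ ≤ M) ∧
    weakL3 (fun x => f x - g x) < ENNReal.ofReal ε

lemma weakL3_mono_ae {u v : E3 → E3} (h : ∀ᵐ x ∂volume, ‖u x‖ ≤ ‖v x‖) :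
    weakL3 u ≤ weakL3 v := by
  refine iSup₂_le fun t ht => ?_
  refine le_trans ?_ (le_iSup₂ (f := fun t (_ : 0 < t) =>
    ENNReal.ofReal t * (volume {x : E3 | t < ‖v x‖}) ^ ((1 : ℝ) / 3)) t ht)
  refine mul_le_mul' le_rfl (ENNReal.rpow_le_rpow ?_ (by norm_num))
  exact measure_mono_ae (h.mono fun x hx hxt => lt_of_lt_of_le hxt hx)

lemma weakL3_add_le (u v : E3 → E3) :
    weakL3 (fun x => u x + v x) ≤ 2 * (weakL3 u + weakL3 v) := by
  refine iSup₂_le fun t ht => ?_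
  have hsub : {x : E3 | t < ‖u x + v x‖} ⊆
      {x : E3 | t / 2 < ‖u x‖} ∪ {x : E3 | t / 2 < ‖v x‖} := by
    intro x hx
    by_contra hc
    simp only [Set.mem_union, Set.mem_setOf_eq, not_or, not_lt] at hc
    obtain ⟨h1, h2⟩ := hc
    have := norm_add_le (u x) (v x)
    simp only [Set.mem_setOf_eq] at hx h1 h2
    linarith
  have hmeas : volume {x : E3 | t < ‖u x + v x‖} ≤
      volume {x : E3 | t / 2 < ‖u x‖} + volume {x : E3 | t / 2 < ‖v x‖} :=
    le_trans (measure_mono hsub) (measure_union_le _ _)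
  set A := volume {x : E3 | t / 2 < ‖u x‖}
  set B := volume {x : E3 | t / 2 < ‖v x‖}
  have h13 : (volume {x : E3 | t < ‖u x + v x‖}) ^ ((1:ℝ)/3) ≤
      A ^ ((1:ℝ)/3) + B ^ ((1:ℝ)/3) := by
    calc (volume {x : E3 | t < ‖u x + v x‖}) ^ ((1:ℝ)/3)
        ≤ (A + B) ^ ((1:ℝ)/3) := by gcongr
      _ ≤ A ^ ((1:ℝ)/3) + B ^ ((1:ℝ)/3) :=
        ENNReal.rpow_add_le_add_rpow A B (by norm_num) (by norm_num)
  have ht2 : 0 < t / 2 := by linarith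
  have hA : ENNReal.ofReal (t/2) * A ^ ((1:ℝ)/3) ≤ weakL3 u :=
    le_iSup₂ (f := fun s (_ : 0 < s) =>
      ENNReal.ofReal s * (volume {x : E3 | s < ‖u x‖}) ^ ((1 : ℝ) / 3)) (t/2) ht2
  have hB : ENNReal.ofReal (t/2) * B ^ ((1:ℝ)/3) ≤ weakL3 v :=
    le_iSup₂ (f := fun s (_ : 0 < s) =>
      ENNReal.ofReal s * (volume {x : E3 | s < ‖v x‖}) ^ ((1 : ℝ) / 3)) (t/2) ht2
  have hoft : ENNReal.ofReal t = 2 * ENNReal.ofReal (t/2) := by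
    rw [← ENNReal.ofReal_ofNat, ← ENNReal.ofReal_mul (by norm_num)]
    congr 1; ring
  calc ENNReal.ofReal t * (volume {x : E3 | t < ‖u x + v x‖}) ^ ((1:ℝ)/3)
      ≤ ENNReal.ofReal t * (A ^ ((1:ℝ)/3) + B ^ ((1:ℝ)/3)) := by gcongr
    _ = 2 * (ENNReal.ofReal (t/2) * A ^ ((1:ℝ)/3)
          + ENNReal.ofReal (t/2) * B ^ ((1:ℝ)/3)) := by rw [hoft]; ring
    _ ≤ 2 * (weakL3 u + weakL3 v) := by gcongr

lemma weakL3_indicator_bounded {g : E3 → E3} {r M : ℝ} (hM : 0 < M)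
    (h : ∀ᵐ x ∂volume, x ∈ Metric.ball (0 : E3) r → ‖g x‖ ≤ M) :
    weakL3 ((Metric.ball (0 : E3) r).indicator g) ≤
      ENNReal.ofReal M * (volume (Metric.ball (0 : E3) r)) ^ ((1 : ℝ)/3) := by
  refine iSup₂_le fun t ht => ?_
  rcases le_or_gt t M with htM | htM
  · have hsub : {x : E3 | t < ‖(Metric.ball (0 : E3) r).indicator g x‖} ⊆
        Metric.ball (0 : E3) r := by
      intro x hx
      by_contra hxr
      simp only [Set.mem_setOf_eq, Set.indicator_of_notMem hxr, norm_zero] at hx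
      linarith
    exact mul_le_mul' (ENNReal.ofReal_le_ofReal htM)
      (ENNReal.rpow_le_rpow (measure_mono hsub) (by norm_num))
  · have hnull : volume {x : E3 | t < ‖(Metric.ball (0 : E3) r).indicator g x‖} = 0 := by
      have h2 : ∀ᵐ x ∂volume, ¬ (t < ‖(Metric.ball (0 : E3) r).indicator g x‖) := by
        filter_upwards [h] with x hx hxt
        by_cases hxr : x ∈ Metric.ball (0 : E3) r
        · rw [Set.indicator_of_mem hxr] at hxt
          exact absurd (hx hxr) (by linarith)
        · rw [Set.indicator_of_notMem hxr, norm_zero] at hxt; linarith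
      have h3 := MeasureTheory.ae_iff.mp h2
      simpa using h3
    rw [hnull, ENNReal.zero_rpow_of_pos (by norm_num), mul_zero]
    exact zero_le'

lemma tendsto_vol_ball :
    Tendsto (fun r : ℝ => volume (Metric.ball (0 : E3) r)) (nhdsWithin 0 (Set.Ioi 0))
      (nhds 0) := by
  have hform : ∀ r ∈ Set.Ioi (0:ℝ), volume (Metric.ball (0 : E3) r) =
      ENNReal.ofReal (r ^ 3) * volume (Metric.ball (0 : E3) 1) := by
    intro r hr
    rw [MeasureTheory.Measure.addHaar_ball_of_pos volume (0 : E3) hr]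
    norm_num [finrank_euclideanSpace]
  have hC : volume (Metric.ball (0 : E3) 1) ≠ ⊤ := measure_ball_lt_top.ne
  have h0 : Tendsto (fun r : ℝ => ENNReal.ofReal (r ^ 3) * volume (Metric.ball (0 : E3) 1))
      (nhdsWithin 0 (Set.Ioi 0)) (nhds 0) := by
    have : Tendsto (fun r : ℝ => ENNReal.ofReal (r ^ 3)) (nhds 0) (nhds 0) := by
      have := (ENNReal.continuous_ofReal.comp (continuous_pow 3)).tendsto (0:ℝ)
      simpa [Function.comp_def] using this
    simpa using (ENNReal.Tendsto.mul_const (this.mono_left nhdsWithin_le_nhds)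
      (Or.inr hC))
  exact h0.congr' (by filter_upwards [self_mem_nhdsWithin] with r hr using (hform r hr).symm)

/-- **Characterization of the class `𝕃`.**  For a measurable `f ∈ L³ʷ(ℝ³)`, the following
are equivalent: (a) `‖𝟙_{B(0,r)} f‖_{L³ʷ} → 0` as `r → 0⁺`; (b) `f` lies in the weak-`L³`
closure of the weak-`L³` functions vanishing a.e. near the origin; (c) `f` lies in the
weak-`L³` closure of the weak-`L³` functions essentially bounded near the origin. -/
theorem L_class_characterization (f : E3 → E3) (hf : Measurable f)
    (hfin : weakL3 f < ⊤) :
    (smallAtOrigin f ↔ approxByVanishing f) ∧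
    (approxByVanishing f ↔ approxByBounded f) := by
  have hab : smallAtOrigin f → approxByVanishing f := by
    intro ha ε hε
    have hev := ENNReal.tendsto_nhds_zero.mp ha (ENNReal.ofReal (ε/2))
      (ENNReal.ofReal_pos.mpr (by linarith))
    obtain ⟨r, hle, hr⟩ := (hev.and eventually_mem_nhdsWithin).exists
    refine ⟨(Metric.ball (0:E3) r)ᶜ.indicator f,
      hf.indicator measurableSet_ball.compl, ?_, ⟨r, hr, ?_⟩, ?_⟩
    · exact lt_of_le_of_lt (weakL3_mono_ae (Eventually.of_forall fun x =>
        norm_indicator_le_norm_self _ _)) hfin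
    · exact Eventually.of_forall fun x hx =>
        Set.indicator_of_notMem (Set.notMem_compl_iff.mpr hx) f
    · have heq : (fun x => f x - (Metric.ball (0:E3) r)ᶜ.indicator f x)
          = (Metric.ball (0:E3) r).indicator f := by
        funext x
        by_cases hx : x ∈ Metric.ball (0:E3) r
        · simp [hx, Set.indicator_of_notMem (Set.notMem_compl_iff.mpr hx)]
        · simp [hx, Set.indicator_of_mem (Set.mem_compl hx)]
      rw [heq]
      exact lt_of_le_of_lt hle
        ((ENNReal.ofReal_lt_ofReal_iff hε).mpr (by linarith))
  have hbc : approxByVanishing f → approxByBounded f := by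
    intro hb ε hε
    obtain ⟨g, hgm, hgfin, ⟨ρ, hρ, hvan⟩, hfg⟩ := hb ε hε
    exact ⟨g, hgm, hgfin, ⟨ρ, hρ, 0, hvan.mono fun x hx hmem => by
      rw [hx hmem]; simp⟩, hfg⟩
  have hca : approxByBounded f → smallAtOrigin f := by
    intro hc
    rw [smallAtOrigin]
    refine ENNReal.tendsto_nhds_zero.mpr fun ε hε => ?_
    rcases eq_or_ne ε ⊤ with rfl | hεtop
    · exact Eventually.of_forall fun _ => le_top
    have hq : 0 < ε / 4 := ENNReal.div_pos hε.ne' (by norm_num)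
    have hqtop : ε / 4 < ⊤ := ENNReal.div_lt_top hεtop (by norm_num)
    obtain ⟨δ', hδ'0, hδ'⟩ := exists_between hq
    have hδ'top : δ' ≠ ⊤ := (hδ'.trans hqtop).ne
    have hδpos : 0 < δ'.toReal := ENNReal.toReal_pos hδ'0.ne' hδ'top
    obtain ⟨g, hgm, hgfin, ⟨ρ, hρ, M, hM⟩, hfg⟩ := hc δ'.toReal hδpos
    have hfg4 : weakL3 (fun x => f x - g x) ≤ ε / 4 := by
      refine le_of_lt (lt_of_lt_of_le hfg ?_)
      rw [ENNReal.ofReal_toReal hδ'top]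
      exact hδ'.le
    set M' : ℝ := max M 1 with hM'def
    have hM'pos : (0:ℝ) < M' := lt_of_lt_of_le one_pos (le_max_right _ _)
    have hMae : ∀ᵐ x ∂volume, x ∈ Metric.ball (0:E3) ρ → ‖g x‖ ≤ M' :=
      hM.mono fun x hx hmem => (hx hmem).trans (le_max_left _ _)
    have hT : Tendsto
        (fun r : ℝ => ENNReal.ofReal M' * (volume (Metric.ball (0:E3) r)) ^ ((1:ℝ)/3))
        (nhdsWithin 0 (Set.Ioi 0)) (nhds 0) := by
      have h1 : Tendsto (fun r : ℝ => (volume (Metric.ball (0:E3) r)) ^ ((1:ℝ)/3))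
          (nhdsWithin 0 (Set.Ioi 0)) (nhds 0) := by
        have := (ENNReal.continuous_rpow_const (y := (1:ℝ)/3)).tendsto 0
        rw [ENNReal.zero_rpow_of_pos (by norm_num)] at this
        exact this.comp tendsto_vol_ball
      simpa using ENNReal.Tendsto.const_mul h1 (Or.inr ENNReal.ofReal_ne_top)
    have hev1 := ENNReal.tendsto_nhds_zero.mp hT (ε/4) hq
    filter_upwards [hev1, Ioo_mem_nhdsGT_of_mem ⟨le_rfl, hρ⟩] with r h1 h2
    obtain ⟨hr0, hrρ⟩ := h2
    have hdecomp : (Metric.ball (0:E3) r).indicator f = fun x =>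
        (Metric.ball (0:E3) r).indicator (fun y => f y - g y) x
          + (Metric.ball (0:E3) r).indicator g x := by
      funext x
      by_cases hx : x ∈ Metric.ball (0:E3) r
      · simp [hx]
      · simp [hx]
    have step1 : weakL3 ((Metric.ball (0:E3) r).indicator (fun y => f y - g y)) ≤ ε/4 :=
      (weakL3_mono_ae (Eventually.of_forall fun x =>
        norm_indicator_le_norm_self _ _)).trans hfg4
    have step2 : weakL3 ((Metric.ball (0:E3) r).indicator g) ≤ ε/4 := by
      refine le_trans (weakL3_indicator_bounded hM'pos ?_) h1
      exact hMae.mono fun x hx hmem => hx (Metric.ball_subset_ball hrρ.le hmem)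
    have harith : 2 * (ε/4 + ε/4) = ε := by
      have h4 : 2 * (ε/4 + ε/4) = 4 * (ε/4) := by ring
      rw [h4, ENNReal.mul_div_cancel' (by norm_num) (by norm_num)]
    calc weakL3 ((Metric.ball (0:E3) r).indicator f)
        = weakL3 (fun x => (Metric.ball (0:E3) r).indicator (fun y => f y - g y) x
            + (Metric.ball (0:E3) r).indicator g x) := by rw [hdecomp]
      _ ≤ 2 * (weakL3 ((Metric.ball (0:E3) r).indicator (fun y => f y - g y))
            + weakL3 ((Metric.ball (0:E3) r).indicator g)) := weakL3_add_le _ _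
      _ ≤ 2 * (ε/4 + ε/4) := by gcongr
      _ = ε := harith
  exact ⟨⟨hab, fun hb => hca (hbc hb)⟩, ⟨hbc, fun hc => hab (hca hc)⟩⟩
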